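/- (Division with remainder relative to a diagram) Let I ⊆ J be ideals in K[[x₁,...,xₙ]], let g¹,...,gˢ ∈ I with {ν(g¹),...,ν(gˢ)} = B(I) and gˢ⁺¹,...,gᵗ ∈ J with {ν(gˢ⁺¹),...,ν(gᵗ)} = B(J) \ N(I), and let Δ₁,...,Δ_t, Δ be the associated decomposition of ℕⁿ (Δᵢ = (ν(gⁱ)+ℕⁿ) minus the earlier Δ_k's, Δ = ℕⁿ \ N(J)). Then an element f ∈ K[[x₁,...,xₙ]] with decomposition f = Σᵢ qᵢgⁱ + r (where ν(gⁱ)+supp(qᵢ) ⊆ Δᵢ and supp(r) ⊆ Δ) satisfies: f ∈ I if and only if q_{s+1} = ... = q_t = 0 and r = 0. -/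

import Mathlib

open Pointwise

/-- The monomial order of the paper: compare the tuples `(α₁, …, αₙ, |α|)`
lexicographically from the right. -/
noncomputable def monOrd {n : ℕ} (α : Fin n →₀ ℕ) : Lex (ℕ × Lex (Fin n → ℕ)) :=
  toLex (∑ i, α i, toLex fun i => α (Fin.rev i))

/-- `a` is the initial exponent `ν f` of `f`. -/
def IsInitExp {K : Type*} [Field K] {n : ℕ} (f : MvPowerSeries (Fin n) K)
    (a : Fin n →₀ ℕ) : Prop :=
  MvPowerSeries.coeff a f ≠ 0 ∧
    ∀ b : Fin n →₀ ℕ, MvPowerSeries.coeff b f ≠ 0 → monOrd a ≤ monOrd b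

/-- The diagram of initial exponents `N(I) = {ν f : f ∈ I, f ≠ 0}`. -/
def initDiagram {K : Type*} [Field K] {n : ℕ} (I : Ideal (MvPowerSeries (Fin n) K)) :
    Set (Fin n →₀ ℕ) :=
  {a | ∃ f ∈ I, IsInitExp f a}

/-- `B` is the smallest finite subset of `N` with `N = B + ℕⁿ`. -/
def IsMinGen {n : ℕ} (N : Set (Fin n →₀ ℕ)) (B : Finset (Fin n →₀ ℕ)) : Prop :=
  ↑B ⊆ N ∧ N = ↑B + (Set.univ : Set (Fin n →₀ ℕ)) ∧
    ∀ B' : Finset (Fin n →₀ ℕ), ↑B' ⊆ N →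
      N = ↑B' + (Set.univ : Set (Fin n →₀ ℕ)) → B ⊆ B'

/-- The region `Δᵢ = (ν(gⁱ) + ℕⁿ) \ (Δ₁ ∪ ⋯ ∪ Δᵢ₋₁)
  = (ν(gⁱ) + ℕⁿ) \ ((ν(g¹)+ℕⁿ) ∪ ⋯ ∪ (ν(gⁱ⁻¹)+ℕⁿ))`. -/
def region {n t : ℕ} (a : Fin t → (Fin n →₀ ℕ)) (i : Fin t) : Set (Fin n →₀ ℕ) :=
  ({a i} + (Set.univ : Set (Fin n →₀ ℕ))) \
    ⋃ k : Fin t, ⋃ _ : k < i, ({a k} + (Set.univ : Set (Fin n →₀ ℕ)))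

section Aux

variable {n : ℕ}

lemma monOrd_inj {a b : Fin n →₀ ℕ} (h : monOrd a = monOrd b) : a = b := by
  have h2 : (fun i => a (Fin.rev i)) = fun i => b (Fin.rev i) := by
    have := congrArg (fun x : Lex (ℕ × Lex (Fin n → ℕ)) => ofLex (ofLex x).2) h
    simpa [monOrd] using this
  ext i
  have := congrFun h2 (Fin.rev i)
  simpa using this

lemma lexpi_lt_add {x y c : Fin n → ℕ} (h : toLex x < toLex y) :
    toLex (fun i => x i + c i) < toLex (fun i => y i + c i) := by
  obtain ⟨i, hj, hi⟩ := h
  refine ⟨i, fun j hji => ?_, ?_⟩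
  · show x j + c j = y j + c j
    have hxy : x j = y j := hj j hji
    rw [hxy]
  · show x i + c i < y i + c i
    exact Nat.add_lt_add_right hi _

lemma lexpi_le_add {x y c : Fin n → ℕ} (h : toLex x ≤ toLex y) :
    toLex (fun i => x i + c i) ≤ toLex (fun i => y i + c i) := by
  rcases lt_or_eq_of_le h with h | h
  · exact le_of_lt (lexpi_lt_add h)
  · have : x = y := h
    exact le_of_eq (by rw [this])

lemma monOrd_add_le_add {a b : Fin n →₀ ℕ} (h : monOrd a ≤ monOrd b) (c : Fin n →₀ ℕ) :
    monOrd (a + c) ≤ monOrd (b + c) := by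
  simp only [monOrd, Prod.Lex.le_iff, ofLex_toLex] at h ⊢
  have hsum : ∀ x : Fin n →₀ ℕ, (∑ i, (x + c) i) = (∑ i, x i) + ∑ i, c i := by
    intro x
    simp [Finsupp.add_apply, Finset.sum_add_distrib]
  rcases h with h | ⟨h1, h2⟩
  · left
    simp only [hsum]
    exact Nat.add_lt_add_right h _
  · right
    constructor
    · simp only [hsum, h1]
    · have h3 := lexpi_le_add (c := fun i => c (Fin.rev i)) h2
      simpa only [Finsupp.add_apply] using h3

lemma monOrd_le_total (a b : Fin n →₀ ℕ) : monOrd a ≤ monOrd b ∨ monOrd b ≤ monOrd a := by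
  rw [monOrd, monOrd, Prod.Lex.le_iff, Prod.Lex.le_iff]
  rcases lt_trichotomy (∑ i, a i) (∑ i, b i) with h | h | h
  · exact Or.inl (Or.inl h)
  · have tri := lt_trichotomy
        (toLex fun i => a (Fin.rev i)) (toLex fun i => b (Fin.rev i))
    rcases tri with ht | ht | ht
    · exact Or.inl (Or.inr ⟨h, le_of_lt ht⟩)
    · exact Or.inl (Or.inr ⟨h, le_of_eq ht⟩)
    · exact Or.inr (Or.inr ⟨h.symm, le_of_lt ht⟩)
  · exact Or.inr (Or.inl h)

lemma monOrd_le_of_not_lt {a b : Fin n →₀ ℕ} (h : ¬ monOrd b < monOrd a) :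
    monOrd a ≤ monOrd b := by
  rcases monOrd_le_total a b with h' | h'
  · exact h'
  · rcases lt_or_eq_of_le h' with h'' | h''
    · exact absurd h'' h
    · exact le_of_eq h''.symm

/-- cancellation: if `b + c = d + e` and `monOrd d ≤ monOrd b`, `monOrd e ≤ monOrd c`
then `b = d` and `c = e`. -/
lemma monOrd_cancel {b c d e : Fin n →₀ ℕ} (hbc : b + c = d + e)
    (hd : monOrd d ≤ monOrd b) (he : monOrd e ≤ monOrd c) : b = d ∧ c = e := by
  have h1 : monOrd (d + e) ≤ monOrd (d + c) := by
    have := monOrd_add_le_add he d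
    simpa [add_comm] using this
  have h2 : monOrd (d + c) ≤ monOrd (b + c) := monOrd_add_le_add hd c
  rw [hbc] at h2
  have h3 : monOrd (d + c) = monOrd (d + e) := le_antisymm h2 h1
  have h4 : d + c = d + e := monOrd_inj h3
  have hc : c = e := by exact add_left_cancel h4
  subst hc
  exact ⟨add_right_cancel hbc, rfl⟩

end Aux

section PowerSeriesAux

variable {K : Type*} [Field K] {n : ℕ}

lemma exists_isInitExp (f : MvPowerSeries (Fin n) K) (hf : f ≠ 0) : ∃ a, IsInitExp f a := by
  have hwf : WellFounded (fun x y : Fin n →₀ ℕ => monOrd x < monOrd y) :=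
    InvImage.wf monOrd (IsWellFounded.wf)
  have hne : {a : Fin n →₀ ℕ | MvPowerSeries.coeff a f ≠ 0}.Nonempty := by
    by_contra hcon
    rw [Set.not_nonempty_iff_eq_empty] at hcon
    apply hf
    ext b
    have hb : b ∉ {a : Fin n →₀ ℕ | MvPowerSeries.coeff a f ≠ 0} := by
      rw [hcon]; exact Set.notMem_empty b
    simp only [Set.mem_setOf_eq, not_not] at hb
    simpa using hb
  obtain ⟨m, hm, hmin⟩ := hwf.has_min _ hne
  exact ⟨m, hm, fun b hb => monOrd_le_of_not_lt (hmin b hb)⟩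

open Classical in
noncomputable def nuExp (p : MvPowerSeries (Fin n) K) : Fin n →₀ ℕ :=
  if hp : p = 0 then 0 else (exists_isInitExp p hp).choose

lemma nuExp_spec {p : MvPowerSeries (Fin n) K} (hp : p ≠ 0) : IsInitExp p (nuExp p) := by
  rw [nuExp, dif_neg hp]
  exact (exists_isInitExp p hp).choose_spec

lemma coeff_mul_lb {q g : MvPowerSeries (Fin n) K} {cq ag : Fin n →₀ ℕ}
    (hq : ∀ b, MvPowerSeries.coeff b q ≠ 0 → monOrd cq ≤ monOrd b)
    (hg : ∀ b, MvPowerSeries.coeff b g ≠ 0 → monOrd ag ≤ monOrd b)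
    {m : Fin n →₀ ℕ} (hm : MvPowerSeries.coeff m (q * g) ≠ 0) :
    monOrd (cq + ag) ≤ monOrd m := by
  classical
  rw [MvPowerSeries.coeff_mul] at hm
  obtain ⟨p, hp, hp0⟩ := Finset.exists_ne_zero_of_sum_ne_zero hm
  rw [Finset.HasAntidiagonal.mem_antidiagonal] at hp
  have h1 : MvPowerSeries.coeff p.1 q ≠ 0 := fun h => hp0 (by rw [h, zero_mul])
  have h2 : MvPowerSeries.coeff p.2 g ≠ 0 := fun h => hp0 (by rw [h, mul_zero])
  calc monOrd (cq + ag) ≤ monOrd (p.1 + ag) := monOrd_add_le_add (hq _ h1) ag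
    _ ≤ monOrd (p.1 + p.2) := by
        have h3 := monOrd_add_le_add (hg _ h2) p.1
        rw [add_comm ag p.1, add_comm p.2 p.1] at h3
        exact h3
    _ = monOrd m := by rw [hp]

lemma coeff_mul_init {q g : MvPowerSeries (Fin n) K} {cq ag : Fin n →₀ ℕ}
    (hq : IsInitExp q cq) (hg : IsInitExp g ag) :
    MvPowerSeries.coeff (cq + ag) (q * g) =
      MvPowerSeries.coeff cq q * MvPowerSeries.coeff ag g := by
  classical
  rw [MvPowerSeries.coeff_mul]
  apply Finset.sum_eq_single (cq, ag)
  · intro p hp hne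
    rw [Finset.HasAntidiagonal.mem_antidiagonal] at hp
    by_contra h0
    have h1 : MvPowerSeries.coeff p.1 q ≠ 0 := fun h => h0 (by rw [h, zero_mul])
    have h2 : MvPowerSeries.coeff p.2 g ≠ 0 := fun h => h0 (by rw [h, mul_zero])
    obtain ⟨e1, e2⟩ := monOrd_cancel hp (hq.2 _ h1) (hg.2 _ h2)
    exact hne (Prod.ext e1 e2)
  · intro hmem
    have hmem2 : ((cq, ag) : (Fin n →₀ ℕ) × (Fin n →₀ ℕ)) ∈ Finset.HasAntidiagonal.antidiagonal (cq + ag) :=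
      Finset.HasAntidiagonal.mem_antidiagonal.mpr rfl
    exact absurd hmem2 hmem

lemma isInitExp_monomial_mul {f : MvPowerSeries (Fin n) K} {α : Fin n →₀ ℕ}
    (h : IsInitExp f α) (β : Fin n →₀ ℕ) :
    IsInitExp (MvPowerSeries.monomial β 1 * f) (α + β) := by
  constructor
  · rw [MvPowerSeries.coeff_monomial_mul, if_pos le_add_self, add_tsub_cancel_right, one_mul]
    exact h.1
  · intro b hb
    rw [MvPowerSeries.coeff_monomial_mul] at hb
    by_cases hle : β ≤ b
    · rw [if_pos hle, one_mul] at hb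
      have h2 := monOrd_add_le_add (h.2 _ hb) β
      rwa [tsub_add_cancel_of_le hle] at h2
    · rw [if_neg hle] at hb
      exact absurd rfl hb

lemma initDiagram_upward {I : Ideal (MvPowerSeries (Fin n) K)} {α : Fin n →₀ ℕ}
    (h : α ∈ initDiagram I) (β : Fin n →₀ ℕ) : α + β ∈ initDiagram I := by
  obtain ⟨f, hfI, hfa⟩ := h
  exact ⟨MvPowerSeries.monomial β 1 * f, Ideal.mul_mem_left _ _ hfI,
    isInitExp_monomial_mul hfa β⟩

lemma single_add_univ_subset_initDiagram {I : Ideal (MvPowerSeries (Fin n) K)}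
    {α : Fin n →₀ ℕ} (h : α ∈ initDiagram I) :
    ({α} + (Set.univ : Set (Fin n →₀ ℕ))) ⊆ initDiagram I := by
  rintro m hm
  rw [Set.mem_add] at hm
  obtain ⟨x, hx, y, -, rfl⟩ := hm
  rw [Set.mem_singleton_iff] at hx
  subst hx
  exact initDiagram_upward h y

end PowerSeriesAux

/-- Hironaka division relative to a pair of diagrams: `f ∈ I` iff the
coefficients `q_{s+1}, …, q_t` and the remainder `r` all vanish. -/
theorem mem_ideal_iff_division_data_vanish {K : Type*} [Field K] {n s t : ℕ}
    (hst : s ≤ t) (I J : Ideal (MvPowerSeries (Fin n) K)) (hIJ : I ≤ J)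
    (g : Fin t → MvPowerSeries (Fin n) K) (a : Fin t → (Fin n →₀ ℕ))
    (hinit : ∀ i, IsInitExp (g i) (a i))
    (hgI : ∀ i : Fin t, (i : ℕ) < s → g i ∈ I)
    (hgJ : ∀ i : Fin t, g i ∈ J)
    (hBI : ∃ B : Finset (Fin n →₀ ℕ), IsMinGen (initDiagram I) B ∧
      (↑B : Set (Fin n →₀ ℕ)) = {x | ∃ i : Fin t, (i : ℕ) < s ∧ a i = x})
    (hBJ : ∃ B : Finset (Fin n →₀ ℕ), IsMinGen (initDiagram J) B ∧
      (↑B : Set (Fin n →₀ ℕ)) \ initDiagram I =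
        {x | ∃ i : Fin t, s ≤ (i : ℕ) ∧ a i = x})
    (f : MvPowerSeries (Fin n) K) (q : Fin t → MvPowerSeries (Fin n) K)
    (r : MvPowerSeries (Fin n) K)
    (hf : f = ∑ i, q i * g i + r)
    (hq : ∀ (i : Fin t) (b : Fin n →₀ ℕ),
      MvPowerSeries.coeff b (q i) ≠ 0 → a i + b ∈ region a i)
    (hr : ∀ b : Fin n →₀ ℕ, MvPowerSeries.coeff b r ≠ 0 → b ∉ initDiagram J) :
    f ∈ I ↔ (∀ i : Fin t, s ≤ (i : ℕ) → q i = 0) ∧ r = 0 := by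
    classical
  obtain ⟨BI, hBImin, hBIset⟩ := hBI
  constructor
  · intro hfI
    by_contra hcon
    rw [not_and_or] at hcon
    push_neg at hcon
    set S2 : Finset (Fin t) := Finset.univ.filter (fun i => ¬ ((i : ℕ) < s)) with hS2def
    have hS2mem : ∀ i : Fin t, i ∈ S2 ↔ s ≤ (i : ℕ) := by
      intro i
      rw [hS2def, Finset.mem_filter]
      simp [not_lt]
    set h : MvPowerSeries (Fin n) K := ∑ i ∈ S2, q i * g i + r with hhdef
    have hhI : h ∈ I := by
      have hfsplit :
          f = (∑ i ∈ Finset.univ.filter (fun i : Fin t => (i : ℕ) < s), q i * g i) + h := by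
        rw [hhdef, hf, ← add_assoc, Finset.sum_filter_add_sum_filter_not]
      have heq : h = f - ∑ i ∈ Finset.univ.filter (fun i : Fin t => (i : ℕ) < s),
          q i * g i := by
        rw [hfsplit]; ring
      rw [heq]
      refine Submodule.sub_mem _ hfI (Ideal.sum_mem _ ?_)
      intro i hi
      rw [Finset.mem_filter] at hi
      exact Ideal.mul_mem_left _ _ (hgI i hi.2)
    set mset : Finset (Fin n →₀ ℕ) :=
      (S2.filter (fun i => q i ≠ 0)).image (fun i => a i + nuExp (q i)) ∪
        (if r = 0 then ∅ else {nuExp r}) with hmsetdef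
    have hmem1 : ∀ i ∈ S2, q i ≠ 0 → a i + nuExp (q i) ∈ mset := by
      intro i hi hqi
      rw [hmsetdef]
      exact Finset.mem_union_left _
        (Finset.mem_image.2 ⟨i, Finset.mem_filter.2 ⟨hi, hqi⟩, rfl⟩)
    have hmem2 : r ≠ 0 → nuExp r ∈ mset := by
      intro hr0
      rw [hmsetdef]
      exact Finset.mem_union_right _ (by rw [if_neg hr0]; exact Finset.mem_singleton_self _)
    have hne : (↑mset : Set (Fin n →₀ ℕ)).Nonempty := by
      rcases hcon with ⟨i, hsi, hqi⟩ | hr0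
      · exact ⟨_, hmem1 i ((hS2mem i).2 hsi) hqi⟩
      · exact ⟨_, hmem2 hr0⟩
    obtain ⟨m, hmmem', hmmin'⟩ :=
      (InvImage.wf (fun x : Fin n →₀ ℕ => monOrd x)
        (IsWellFounded.wf : WellFounded ((· < ·) : Lex (ℕ × Lex (Fin n → ℕ)) →
          Lex (ℕ × Lex (Fin n → ℕ)) → Prop))).has_min (↑mset) hne
    have hmmem : m ∈ mset := hmmem'
    have hmmin : ∀ x ∈ mset, monOrd m ≤ monOrd x := fun x hx =>
      monOrd_le_of_not_lt (hmmin' x hx)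
    -- minimality of `m` among exponents of `h`
    have hlow : ∀ b, MvPowerSeries.coeff b h ≠ 0 → monOrd m ≤ monOrd b := by
      intro b hb
      rw [hhdef, map_add, map_sum] at hb
      have hcases : (∑ i ∈ S2, MvPowerSeries.coeff b (q i * g i)) ≠ 0 ∨
          MvPowerSeries.coeff b r ≠ 0 := by
        by_contra hc
        push_neg at hc
        rw [hc.1, hc.2, add_zero] at hb
        exact hb rfl
      rcases hcases with hsum | hrb
      · obtain ⟨i, hiS, hi0⟩ := Finset.exists_ne_zero_of_sum_ne_zero hsum
        have hqi : q i ≠ 0 := fun h0 => hi0 (by rw [h0, zero_mul, map_zero])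
        have hlb := coeff_mul_lb (nuExp_spec hqi).2 (hinit i).2 hi0
        rw [add_comm (nuExp (q i)) (a i)] at hlb
        exact le_trans (hmmin _ (hmem1 i hiS hqi)) hlb
      · have hr0 : r ≠ 0 := fun h0 => hrb (by rw [h0, map_zero])
        exact le_trans (hmmin _ (hmem2 hr0)) ((nuExp_spec hr0).2 b hrb)
    -- if the coefficient of `h` at `m` is nonzero then `m ∈ N(I)`
    have hdiagI : MvPowerSeries.coeff m h ≠ 0 →
        ∃ k : Fin t, (k : ℕ) < s ∧ m ∈ ({a k} + (Set.univ : Set (Fin n →₀ ℕ))) := by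
      intro hm0
      have hmI : m ∈ initDiagram I := ⟨h, hhI, hm0, hlow⟩
      rw [hBImin.2.1, Set.mem_add] at hmI
      obtain ⟨x, hx, y, -, hxy⟩ := hmI
      have hx' : x ∈ {x | ∃ i : Fin t, (i : ℕ) < s ∧ a i = x} := by
        rw [← hBIset]; exact hx
      obtain ⟨k, hks, hak⟩ := hx'
      refine ⟨k, hks, ?_⟩
      rw [← hxy, ← hak]
      exact Set.add_mem_add rfl (Set.mem_univ y)
    -- the two possible shapes of `m`
    rw [hmsetdef] at hmmem
    rcases Finset.mem_union.1 hmmem with hm1 | hm2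
    · -- `m = a i0 + ν (q i0)`
      obtain ⟨i0, hi0mem, hmi0⟩ := Finset.mem_image.1 hm1
      obtain ⟨hi0S2, hqi0⟩ := Finset.mem_filter.1 hi0mem
      have hreg : m ∈ region a i0 := by
        rw [← hmi0]
        exact hq i0 (nuExp (q i0)) (nuExp_spec hqi0).1
      have hcoeff : MvPowerSeries.coeff m h ≠ 0 := by
        rw [hhdef, map_add, map_sum]
        have hrterm : MvPowerSeries.coeff m r = 0 := by
          by_contra hc
          exact (hr m hc)
            (single_add_univ_subset_initDiagram ⟨g i0, hgJ i0, hinit i0⟩ hreg.1)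
        have hterms : ∀ i ∈ S2, i ≠ i0 → MvPowerSeries.coeff m (q i * g i) = 0 := by
          intro i hiS hnei
          by_contra hc
          have hqi : q i ≠ 0 := fun h0 => hc (by rw [h0, zero_mul, map_zero])
          have h1 := coeff_mul_lb (nuExp_spec hqi).2 (hinit i).2 hc
          rw [add_comm (nuExp (q i)) (a i)] at h1
          have h2 : monOrd m ≤ monOrd (a i + nuExp (q i)) := hmmin _ (hmem1 i hiS hqi)
          have hm_eq : m = a i + nuExp (q i) := monOrd_inj (le_antisymm h2 h1)
          have hregi : m ∈ region a i := by
            rw [hm_eq]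
            exact hq i (nuExp (q i)) (nuExp_spec hqi).1
          rcases lt_or_gt_of_ne hnei with hlt | hgt
          · exact hreg.2 (Set.mem_iUnion.2 ⟨i, Set.mem_iUnion.2 ⟨hlt, hregi.1⟩⟩)
          · exact hregi.2 (Set.mem_iUnion.2 ⟨i0, Set.mem_iUnion.2 ⟨hgt, hreg.1⟩⟩)
        rw [Finset.sum_eq_single i0 hterms (fun hni0 => absurd hi0S2 hni0), hrterm, add_zero,
          ← hmi0, add_comm (a i0) (nuExp (q i0)), coeff_mul_init (nuExp_spec hqi0) (hinit i0)]
        exact mul_ne_zero (nuExp_spec hqi0).1 (hinit i0).1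
      obtain ⟨k, hks, hkmem⟩ := hdiagI hcoeff
      have hsle : s ≤ (i0 : ℕ) := (hS2mem i0).1 hi0S2
      have hki0 : k < i0 := by
        rw [Fin.lt_def]; omega
      exact hreg.2 (Set.mem_iUnion.2 ⟨k, Set.mem_iUnion.2 ⟨hki0, hkmem⟩⟩)
    · -- `m = ν r`
      have hr0 : r ≠ 0 := by
        intro h0
        rw [if_pos h0] at hm2
        exact absurd hm2 (Finset.notMem_empty m)
      have hmr : m = nuExp r := by
        rw [if_neg hr0] at hm2
        exact Finset.mem_singleton.1 hm2
      have hnJ : m ∉ initDiagram J := hr m (by rw [hmr]; exact (nuExp_spec hr0).1)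
      have hcoeff : MvPowerSeries.coeff m h ≠ 0 := by
        rw [hhdef, map_add, map_sum]
        have hterms : ∀ i ∈ S2, MvPowerSeries.coeff m (q i * g i) = 0 := by
          intro i hiS
          by_contra hc
          have hqi : q i ≠ 0 := fun h0 => hc (by rw [h0, zero_mul, map_zero])
          have h1 := coeff_mul_lb (nuExp_spec hqi).2 (hinit i).2 hc
          rw [add_comm (nuExp (q i)) (a i)] at h1
          have h2 : monOrd m ≤ monOrd (a i + nuExp (q i)) := hmmin _ (hmem1 i hiS hqi)
          have hm_eq : m = a i + nuExp (q i) := monOrd_inj (le_antisymm h2 h1)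
          apply hnJ
          refine single_add_univ_subset_initDiagram ⟨g i, hgJ i, hinit i⟩ ?_
          rw [hm_eq]
          exact (hq i (nuExp (q i)) (nuExp_spec hqi).1).1
        rw [Finset.sum_eq_zero hterms, zero_add, hmr]
        exact (nuExp_spec hr0).1
      obtain ⟨k, hks, hkmem⟩ := hdiagI hcoeff
      exact hnJ (single_add_univ_subset_initDiagram ⟨g k, hIJ (hgI k hks), hinit k⟩ hkmem)
  · rintro ⟨hq0, hr0⟩
    rw [hf, hr0, add_zero]
    refine Ideal.sum_mem _ ?_
    intro i _
    by_cases hi : (i : ℕ) < s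
    · exact Ideal.mul_mem_left _ _ (hgI i hi)
    · rw [hq0 i (not_lt.1 hi), zero_mul]
      exact zero_mem _
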